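/- arXiv:2403.19152 — 2 statements merged into one kernel-verified Lean document; each statement's English description precedes it below -/
import Mathlib

section
/- Let ρ be a real-valued C² function on an open subset of ℂⁿ × ℂᵐ and let w be a point where the fiberwise complex Hessian (ρ_{p q̄}(w)) is invertible and ρ(w) − |∂ρ|²(w) ≠ 0. Then for every 1 ≤ j ≤ n one has ρ_j(w) + Σ_p ν_j^p(w)ρ_p(w) = ρ(w)·(ρ_j(w) − Σ_q ρ_{j q̄}(w)ρ^q(w))/(ρ(w) − |∂ρ|²(w)). In particular, at every such point where in addition ρ(w) = 0, the (1,0) vector field V_j := ∂/∂t_j + Σ_p ν_j^p ∂/∂z_p satisfies V_j(ρ)(w) = 0; that is, V_j is tangent to the level set {ρ = 0}. -/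
open MeasureTheory Complex
open scoped ComplexOrder

noncomputable section

/-- `ℂⁿ` with the Euclidean metric. -/
abbrev CC (n : ℕ) := EuclideanSpace ℂ (Fin n)

/-- `ℂⁿ × ℂᵐ`. -/
abbrev Pt (n m : ℕ) := CC n × CC m

instance (n : ℕ) : MeasurableSpace (CC n) := borel _
instance (n : ℕ) : BorelSpace (CC n) := ⟨rfl⟩
instance (n : ℕ) : InnerProductSpace ℝ (CC n) := InnerProductSpace.rclikeToReal ℂ (CC n)

/-- The Wirtinger derivative `∂f/∂v` of `f` at `x` in the (complex) direction `v`. -/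
def wdz {E : Type*} [NormedAddCommGroup E] [NormedSpace ℂ E]
    (f : E → ℂ) (x v : E) : ℂ :=
  (1 / 2 : ℂ) * ((fderiv ℝ f x) v - Complex.I * (fderiv ℝ f x) (Complex.I • v))

/-- The conjugate Wirtinger derivative `∂f/∂v̄`. -/
def wdzbar {E : Type*} [NormedAddCommGroup E] [NormedSpace ℂ E]
    (f : E → ℂ) (x v : E) : ℂ :=
  (1 / 2 : ℂ) * ((fderiv ℝ f x) v + Complex.I * (fderiv ℝ f x) (Complex.I • v))

/-- The Levi form `Σ f_{a b̄} v_a v̄_b` of `f` at `x` evaluated at the direction `v`. -/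
def levi {E : Type*} [NormedAddCommGroup E] [NormedSpace ℂ E]
    (f : E → ℂ) (x v : E) : ℂ :=
  wdz (fun y => wdzbar f y v) x v

/-- `t`-coordinate direction in `ℂⁿ × ℂᵐ`. -/
def et {n m : ℕ} (j : Fin n) : Pt n m := (EuclideanSpace.single j 1, 0)

/-- `z`-coordinate direction in `ℂⁿ × ℂᵐ`. -/
def ez {n m : ℕ} (p : Fin m) : Pt n m := (0, EuclideanSpace.single p 1)

/-- A real-valued function viewed as a complex-valued one. -/
def rc {E : Type*} (ρ : E → ℝ) : E → ℂ := fun w => (ρ w : ℂ)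

/-- `ρ_j := ∂ρ/∂t_j`. -/
def Dt {n m : ℕ} (ρ : Pt n m → ℝ) (j : Fin n) (w : Pt n m) : ℂ := wdz (rc ρ) w (et j)

/-- `ρ_{k̄} := ∂ρ/∂t̄_k`. -/
def Dtbar {n m : ℕ} (ρ : Pt n m → ℝ) (k : Fin n) (w : Pt n m) : ℂ := wdzbar (rc ρ) w (et k)

/-- `ρ_p := ∂ρ/∂z_p`. -/
def Dz {n m : ℕ} (ρ : Pt n m → ℝ) (p : Fin m) (w : Pt n m) : ℂ := wdz (rc ρ) w (ez p)

/-- `ρ_{p̄} := ∂ρ/∂z̄_p`. -/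
def Dzbar {n m : ℕ} (ρ : Pt n m → ℝ) (p : Fin m) (w : Pt n m) : ℂ := wdzbar (rc ρ) w (ez p)

/-- `ρ_{j k̄} := ∂²ρ/∂t_j∂t̄_k`. -/
def Dttbar {n m : ℕ} (ρ : Pt n m → ℝ) (j k : Fin n) (w : Pt n m) : ℂ :=
  wdz (fun x => wdzbar (rc ρ) x (et k)) w (et j)

/-- `ρ_{j q̄} := ∂²ρ/∂t_j∂z̄_q`. -/
def Dtzbar {n m : ℕ} (ρ : Pt n m → ℝ) (j : Fin n) (q : Fin m) (w : Pt n m) : ℂ :=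
  wdz (fun x => wdzbar (rc ρ) x (ez q)) w (et j)

/-- `ρ_{p q̄} := ∂²ρ/∂z_p∂z̄_q`, the fiberwise complex Hessian. -/
def Dzzbar {n m : ℕ} (ρ : Pt n m → ℝ) (p q : Fin m) (w : Pt n m) : ℂ :=
  wdz (fun x => wdzbar (rc ρ) x (ez q)) w (ez p)

/-- The fiberwise complex Hessian matrix `(ρ_{p q̄})`. -/
def fibHess {n m : ℕ} (ρ : Pt n m → ℝ) (w : Pt n m) : Matrix (Fin m) (Fin m) ℂ :=
  Matrix.of fun p q => Dzzbar ρ p q w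

/-- The inverse matrix `(ρ^{p q̄})` of the fiberwise complex Hessian. -/
def fibHessInv {n m : ℕ} (ρ : Pt n m → ℝ) (w : Pt n m) : Matrix (Fin m) (Fin m) ℂ :=
  (fibHess ρ w)⁻¹

/-- `ρ^p := Σ_q ρ^{p q̄} ρ_q`. -/
def rup {n m : ℕ} (ρ : Pt n m → ℝ) (p : Fin m) (w : Pt n m) : ℂ :=
  ∑ q, fibHessInv ρ w p q * Dz ρ q w

/-- `|∂ρ|² := Σ_p ρ_{p̄} ρ^p`. -/
def dnorm2 {n m : ℕ} (ρ : Pt n m → ℝ) (w : Pt n m) : ℂ :=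
  ∑ p, Dzbar ρ p w * rup ρ p w

/-- The vector field coefficients `ν_j^p`. -/
def nu {n m : ℕ} (ρ : Pt n m → ℝ) (j : Fin n) (p : Fin m) (w : Pt n m) : ℂ :=
  Dt ρ j w * (starRingEnd ℂ) (rup ρ p w) / ((ρ w : ℂ) - dnorm2 ρ w)
    - ∑ q, (Dtzbar ρ j q w * fibHessInv ρ w q p
        + Dtzbar ρ j q w * rup ρ q w * (starRingEnd ℂ) (rup ρ p w) / ((ρ w : ℂ) - dnorm2 ρ w))

/-- The fiber of `Ω` over `t`. -/
def fib {n m : ℕ} (Ω : Set (Pt n m)) (t : CC n) : Set (CC m) := {z | (t, z) ∈ Ω}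

/-- A family of bounded domains over a domain `U ⊂ ℂⁿ`. -/
structure IsFamilyOfBddDomains {n m : ℕ} (U : Set (CC n)) (Ω : Set (Pt n m)) : Prop where
  isOpen_base : IsOpen U
  isConnected_base : IsConnected U
  isOpen_total : IsOpen Ω
  isConnected_total : IsConnected Ω
  proj_mem : ∀ w ∈ Ω, w.1 ∈ U
  proj_surj : ∀ t ∈ U, ∃ z, (t, z) ∈ Ω
  bounded_fib : ∀ t ∈ U, Bornology.IsBounded (fib Ω t)

/-- `ρ` is a `C^k` (boundary) defining function of the family `Ω`. -/
structure IsDefiningFunction {n m : ℕ} (U : Set (CC n)) (Ω : Set (Pt n m))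
    (ρ : Pt n m → ℝ) (k : ℕ) : Prop where
  contDiff : ContDiff ℝ k ρ
  eq_sublevel : Ω = {w : Pt n m | w.1 ∈ U ∧ ρ w < 0}
  grad_ne : ∀ t ∈ U, ∀ z ∈ frontier (fib Ω t), fderiv ℝ (fun z' => ρ (t, z')) z ≠ 0

/-- `Ω` has the plurisubharmonic defining function `ρ`: `ρ` is a `C⁴` defining function,
plurisubharmonic on a neighborhood of the closure of `Ω`, and `ρ(t,·)` is strictly
plurisubharmonic on the closure of each fiber. -/
structure IsPshDefining {n m : ℕ} (U : Set (CC n)) (Ω : Set (Pt n m))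
    (ρ : Pt n m → ℝ) : Prop where
  defining : IsDefiningFunction U Ω ρ 4
  psh_nhd : ∃ W, IsOpen W ∧ closure Ω ⊆ W ∧ ∀ w ∈ W, ∀ v : Pt n m, 0 ≤ levi (rc ρ) w v
  fib_strict : ∀ t ∈ U, ∀ z ∈ closure (fib Ω t), ∀ v : CC m, v ≠ 0 →
    0 < levi (fun z' => (ρ (t, z') : ℂ)) z v

/-- `ρ` exhibits `Ω` as a strictly pseudoconvex family: `ρ` is a `C⁴` defining function which is
strictly plurisubharmonic on a neighborhood of the closure of `Ω`. -/
structure IsSPCDefining {n m : ℕ} (U : Set (CC n)) (Ω : Set (Pt n m))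
    (ρ : Pt n m → ℝ) : Prop where
  defining : IsDefiningFunction U Ω ρ 4
  strict_psh_nhd : ∃ W, IsOpen W ∧ closure Ω ⊆ W ∧
    ∀ w ∈ W, ∀ v : Pt n m, v ≠ 0 → 0 < levi (rc ρ) w v

/-- Chern connection coefficient matrix `Γ_a = (Γ_{aλ}^μ)` of a metric `h` in the
direction `a`; it is determined by `Σ_μ Γ_{aλ}^μ h_{μ ν̄} = ∂h_{λ ν̄}/∂w_a`. -/
def Gam {E : Type*} [NormedAddCommGroup E] [NormedSpace ℂ E] {r : ℕ}
    (h : E → Matrix (Fin r) (Fin r) ℂ) (a w : E) : Matrix (Fin r) (Fin r) ℂ :=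
  (Matrix.of fun l ν => wdz (fun x => h x l ν) w a) * (h w)⁻¹

/-- Curvature coefficients `A_{abλμ} = Σ_α (−∂Γ_{aλ}^α/∂w̄_b) h_{α μ̄}`. -/
def curvA {E : Type*} [NormedAddCommGroup E] [NormedSpace ℂ E] {r : ℕ}
    (h : E → Matrix (Fin r) (Fin r) ℂ) (a b w : E) : Matrix (Fin r) (Fin r) ℂ :=
  (Matrix.of fun l α => - wdzbar (fun x => Gam h a x l α) w b) * (h w)

/-- Nakano (semi-)positivity at a point, with respect to the directions `e`. -/
def NakanoPosAt {E : Type*} [NormedAddCommGroup E] [NormedSpace ℂ E] {r : ℕ}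
    {ι : Type*} [Fintype ι] (h : E → Matrix (Fin r) (Fin r) ℂ) (e : ι → E) (w : E) : Prop :=
  ∀ u : ι → Fin r → ℂ,
    0 ≤ ∑ a, ∑ b, ∑ l, ∑ μ, curvA h (e a) (e b) w l μ * u a l * (starRingEnd ℂ) (u b μ)

/-- Nakano strict positivity at a point, with respect to the directions `e`. -/
def NakanoStrictPosAt {E : Type*} [NormedAddCommGroup E] [NormedSpace ℂ E] {r : ℕ}
    {ι : Type*} [Fintype ι] (h : E → Matrix (Fin r) (Fin r) ℂ) (e : ι → E) (w : E) : Prop :=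
  ∀ u : ι → Fin r → ℂ, u ≠ 0 →
    0 < ∑ a, ∑ b, ∑ l, ∑ μ, curvA h (e a) (e b) w l μ * u a l * (starRingEnd ℂ) (u b μ)

/-- All coordinate directions of `ℂⁿ × ℂᵐ`. -/
def dirTZ {n m : ℕ} : Fin n ⊕ Fin m → Pt n m := Sum.elim et ez

/-- The pointwise inner product `⟨a,b⟩_h = Σ_{λ,μ} a_λ \overline{b_μ} h_{λ μ̄}`. -/
def hInner {r : ℕ} (H : Matrix (Fin r) (Fin r) ℂ) (a b : Fin r → ℂ) : ℂ :=
  ∑ l, ∑ μ, a l * (starRingEnd ℂ) (b μ) * H l μ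

/-- The Chern covariant derivative `(D_a u)_α = ∂u_α/∂a + Σ_λ Γ_{aλ}^α u_λ`. -/
def covD {E : Type*} [NormedAddCommGroup E] [NormedSpace ℂ E] {r : ℕ}
    (h : E → Matrix (Fin r) (Fin r) ℂ) (a : E) (u : E → Fin r → ℂ) (w : E) (α : Fin r) : ℂ :=
  wdz (fun x => u x α) w a + ∑ l, Gam h a w l α * u w l

/-- The operator `L_j u := D^F_{t_j} u + Σ_p D^F_{z_p}(ν_j^p u)`. -/
def Lop {n m r : ℕ} (h : Pt n m → Matrix (Fin r) (Fin r) ℂ) (ρ : Pt n m → ℝ) (j : Fin n)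
    (u : Pt n m → Fin r → ℂ) (w : Pt n m) (α : Fin r) : ℂ :=
  covD h (et j) u w α + ∑ p, covD h (ez p) (fun x β => nu ρ j p x * u x β) w α

/-- `H(h^F)_{jkλμ}`. -/
def Hcoef {n m r : ℕ} (h : Pt n m → Matrix (Fin r) (Fin r) ℂ) (ρ : Pt n m → ℝ)
    (j k : Fin n) (l μ : Fin r) (w : Pt n m) : ℂ :=
  curvA h (et j) (et k) w l μ + ∑ p, nu ρ j p w * curvA h (ez p) (et k) w l μ
    + ∑ q, (starRingEnd ℂ) (nu ρ k q w) * curvA h (et j) (ez q) w l μ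
    + ∑ p, ∑ q, nu ρ j p w * (starRingEnd ℂ) (nu ρ k q w) * curvA h (ez p) (ez q) w l μ

/-- `H₀(ρ)_{j k̄} := ρ_{j k̄} − Σ_{p,s} ρ_{j s̄} ρ^{s p̄} \overline{ρ_{k p̄}}`. -/
def H0 {n m : ℕ} (ρ : Pt n m → ℝ) (j k : Fin n) (w : Pt n m) : ℂ :=
  Dttbar ρ j k w - ∑ p, ∑ s, Dtzbar ρ j s w * fibHessInv ρ w s p * (starRingEnd ℂ) (Dtzbar ρ k p w)

/-- `H(ρ)_{j k̄}`. -/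
def Hrho {n m : ℕ} (ρ : Pt n m → ℝ) (j k : Fin n) (w : Pt n m) : ℂ :=
  H0 ρ j k w +
    (Dt ρ j w - ∑ s, Dtzbar ρ j s w * rup ρ s w) *
      (Dtbar ρ k w - ∑ p, (starRingEnd ℂ) (Dtzbar ρ k p w) * (starRingEnd ℂ) (rup ρ p w)) /
        dnorm2 ρ w

/-- `w` is the projection `π_⊥ g` of `g` onto the orthogonal complement of the space of
square-integrable fiberwise holomorphic `ℂ^r`-valued functions in the weighted `L²`-space
of the fiber `Ω_t`. -/
def IsPerpProj {n m r : ℕ} (h : Pt n m → Matrix (Fin r) (Fin r) ℂ) (Ω : Set (Pt n m))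
    (t : CC n) (g w : CC m → Fin r → ℂ) : Prop :=
  (∀ l, DifferentiableOn ℂ (fun z => g z l - w z l) (fib Ω t)) ∧
  (∀ l, MemLp (fun z => g z l - w z l) 2 (volume.restrict (fib Ω t))) ∧
  (∀ l, MemLp (fun z => w z l) 2 (volume.restrict (fib Ω t))) ∧
  (∀ f : CC m → Fin r → ℂ, (∀ l, DifferentiableOn ℂ (fun z => f z l) (fib Ω t)) →
    (∀ l, MemLp (fun z => f z l) 2 (volume.restrict (fib Ω t))) →
    ∫ z in fib Ω t, hInner (h (t, z)) (w z) (f z) = 0)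

/-- Plurisubharmonicity (upper semicontinuity plus the sub-mean value inequality on
complex discs) of a real-valued function on a set. -/
def IsPshOn {E : Type*} [NormedAddCommGroup E] [NormedSpace ℂ E]
    (f : E → ℝ) (s : Set E) : Prop :=
  UpperSemicontinuousOn f s ∧
  ∀ (a v : E) (R : ℝ), 0 < R → (∀ c : ℂ, ‖c‖ ≤ R → a + c • v ∈ s) →
    f a ≤ (1 / (2 * Real.pi)) *
      ∫ θ in (0:ℝ)..(2 * Real.pi), f (a + ((R : ℂ) * Complex.exp (θ * Complex.I)) • v)


section Aux

variable {n m : ℕ}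

lemma fderiv_rc_eq {s : Set (Pt n m)} (hs : IsOpen s) {ρ : Pt n m → ℝ}
    (hρ : ContDiffOn ℝ 2 ρ s) {x : Pt n m} (hx : x ∈ s) :
    fderiv ℝ (rc ρ) x = Complex.ofRealCLM.comp (fderiv ℝ ρ x) := by
  have hd : DifferentiableAt ℝ ρ x :=
    (hρ.contDiffAt (hs.mem_nhds hx)).differentiableAt (by norm_num)
  exact (Complex.ofRealCLM.hasFDerivAt.comp x hd.hasFDerivAt).fderiv

lemma snd_wdzbar {s : Set (Pt n m)} (hs : IsOpen s) {ρ : Pt n m → ℝ}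
    (hρ : ContDiffOn ℝ 2 ρ s) {x : Pt n m} (hx : x ∈ s) (v u : Pt n m) :
    fderiv ℝ (fun y => wdzbar (rc ρ) y v) x u
      = (1/2 : ℂ) * (((fderiv ℝ (fderiv ℝ ρ) x u v : ℝ) : ℂ)
          + Complex.I * ((fderiv ℝ (fderiv ℝ ρ) x u (Complex.I • v) : ℝ) : ℂ)) := by
  have hF : HasFDerivAt (fderiv ℝ ρ) (fderiv ℝ (fderiv ℝ ρ) x) x :=
    (((hρ.contDiffAt (hs.mem_nhds hx)).fderiv_right (m := 1) (by norm_num)).differentiableAt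
      (by norm_num)).hasFDerivAt
  set D2 := fderiv ℝ (fderiv ℝ ρ) x with hD2
  have h1 : ∀ a : Pt n m, HasFDerivAt (fun y => ((fderiv ℝ ρ y a : ℝ) : ℂ))
      (Complex.ofRealCLM.comp ((ContinuousLinearMap.apply ℝ ℝ a).comp D2)) x := fun a =>
    Complex.ofRealCLM.hasFDerivAt.comp x
      ((ContinuousLinearMap.apply ℝ ℝ a).hasFDerivAt.comp x hF)
  have hev : (fun y => wdzbar (rc ρ) y v)
      =ᶠ[nhds x] (fun y => (1/2 : ℂ) * (((fderiv ℝ ρ y v : ℝ) : ℂ)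
        + Complex.I * ((fderiv ℝ ρ y (Complex.I • v) : ℝ) : ℂ))) := by
    filter_upwards [hs.mem_nhds hx] with y hy
    simp [wdzbar, fderiv_rc_eq hs hρ hy]
  rw [hev.fderiv_eq]
  have h2 : HasFDerivAt (fun y => (1/2 : ℂ) * (((fderiv ℝ ρ y v : ℝ) : ℂ)
        + Complex.I * ((fderiv ℝ ρ y (Complex.I • v) : ℝ) : ℂ)))
      ((1/2 : ℂ) • ((Complex.ofRealCLM.comp ((ContinuousLinearMap.apply ℝ ℝ v).comp D2))
        + Complex.I • (Complex.ofRealCLM.comp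
            ((ContinuousLinearMap.apply ℝ ℝ (Complex.I • v)).comp D2)))) x :=
    ((h1 v).add ((h1 (Complex.I • v)).const_mul Complex.I)).const_mul (1/2 : ℂ)
  rw [h2.fderiv]
  simp only [ContinuousLinearMap.smul_apply, ContinuousLinearMap.add_apply,
    ContinuousLinearMap.coe_comp', Function.comp_apply, Complex.ofRealCLM_apply,
    ContinuousLinearMap.apply_apply, smul_eq_mul]

lemma hermDzzbar {s : Set (Pt n m)} (hs : IsOpen s) {ρ : Pt n m → ℝ}
    (hρ : ContDiffOn ℝ 2 ρ s) {x : Pt n m} (hx : x ∈ s) (p q : Fin m) :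
    (starRingEnd ℂ) (Dzzbar ρ p q x) = Dzzbar ρ q p x := by
  have hsym : IsSymmSndFDerivAt ℝ ρ x :=
    (hρ.contDiffAt (hs.mem_nhds hx)).isSymmSndFDerivAt (by norm_num)
  simp only [Dzzbar, wdz, snd_wdzbar hs hρ hx]
  rw [hsym.eq (ez p) (ez q), hsym.eq (ez p) (Complex.I • ez q),
    hsym.eq (Complex.I • ez p) (ez q), hsym.eq (Complex.I • ez p) (Complex.I • ez q)]
  simp only [map_mul, map_sub, map_add, map_one, map_div₀, map_ofNat,
    Complex.conj_ofReal, Complex.conj_I]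
  ring

lemma conj_Dz {s : Set (Pt n m)} (hs : IsOpen s) {ρ : Pt n m → ℝ}
    (hρ : ContDiffOn ℝ 2 ρ s) {x : Pt n m} (hx : x ∈ s) (p : Fin m) :
    (starRingEnd ℂ) (Dz ρ p x) = Dzbar ρ p x := by
  simp only [Dz, Dzbar, wdz, wdzbar, fderiv_rc_eq hs hρ hx]
  simp only [ContinuousLinearMap.coe_comp', Function.comp_apply, Complex.ofRealCLM_apply,
    map_mul, map_sub, map_add, map_one, map_div₀, map_ofNat,
    Complex.conj_ofReal, Complex.conj_I]
  ring

end Aux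

/-- Let `ρ` be a real-valued `C²` function on an open subset of `ℂⁿ × ℂᵐ`
and `w` a point where the fiberwise complex Hessian is invertible and `ρ(w) − |∂ρ|²(w) ≠ 0`.
Then `ρ_j + Σ_p ν_j^p ρ_p = ρ·(ρ_j − Σ_q ρ_{j q̄} ρ^q)/(ρ − |∂ρ|²)` at `w`; in particular, if
moreover `ρ(w) = 0` then `V_j(ρ)(w) = ρ_j(w) + Σ_p ν_j^p(w) ρ_p(w) = 0`, i.e. the field
`V_j = ∂/∂t_j + Σ_p ν_j^p ∂/∂z_p` is tangent to the level set `{ρ = 0}`. -/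
theorem Vj_tangent_to_level_set {n m : ℕ} (s : Set (Pt n m)) (hs : IsOpen s)
    (ρ : Pt n m → ℝ) (hρ : ContDiffOn ℝ 2 ρ s) (w : Pt n m) (hw : w ∈ s)
    (hinv : IsUnit (fibHess ρ w).det)
    (hne : (ρ w : ℂ) - dnorm2 ρ w ≠ 0) :
    (∀ j : Fin n, Dt ρ j w + ∑ p, nu ρ j p w * Dz ρ p w
      = (ρ w : ℂ) * (Dt ρ j w - ∑ q, Dtzbar ρ j q w * rup ρ q w)
          / ((ρ w : ℂ) - dnorm2 ρ w)) ∧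
    (ρ w = 0 → ∀ j : Fin n, Dt ρ j w + ∑ p, nu ρ j p w * Dz ρ p w = 0) := by
  -- Hermitian symmetry of the inverse fiberwise Hessian
  have hH : (fibHess ρ w).conjTranspose = fibHess ρ w := by
    ext p q
    simp only [Matrix.conjTranspose_apply, fibHess, Matrix.of_apply]
    exact hermDzzbar hs hρ hw q p
  have hHinv : ∀ p q, (starRingEnd ℂ) (fibHessInv ρ w p q) = fibHessInv ρ w q p := by
    intro p q
    have h2 : (fibHessInv ρ w).conjTranspose = fibHessInv ρ w := by
      rw [fibHessInv, Matrix.conjTranspose_nonsing_inv, hH]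
    calc (starRingEnd ℂ) (fibHessInv ρ w p q)
        = (fibHessInv ρ w).conjTranspose q p := rfl
      _ = fibHessInv ρ w q p := by rw [h2]
  -- the key sum identity : Σ_p conj(ρ^p) ρ_p = |∂ρ|²
  have hS : ∑ p, (starRingEnd ℂ) (rup ρ p w) * Dz ρ p w = dnorm2 ρ w := by
    simp only [rup, dnorm2, map_sum, map_mul, hHinv, conj_Dz hs hρ hw, Finset.sum_mul,
      Finset.mul_sum]
    rw [Finset.sum_comm]
    exact Finset.sum_congr rfl fun q _ => Finset.sum_congr rfl fun p _ => by ring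
  set d := dnorm2 ρ w with hd
  set c := ((ρ w : ℝ) : ℂ) with hc
  have key : ∀ j : Fin n, ∑ p, nu ρ j p w * Dz ρ p w
      = Dt ρ j w * d / (c - d) - (∑ q, Dtzbar ρ j q w * rup ρ q w)
        - (∑ q, Dtzbar ρ j q w * rup ρ q w) * d / (c - d) := by
    intro j
    have expand : ∀ p : Fin m, nu ρ j p w * Dz ρ p w
        = Dt ρ j w * ((starRingEnd ℂ) (rup ρ p w) * Dz ρ p w) / (c - d)
          - (∑ q, Dtzbar ρ j q w * (fibHessInv ρ w q p * Dz ρ p w))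
          - (∑ q, Dtzbar ρ j q w * rup ρ q w
              * ((starRingEnd ℂ) (rup ρ p w) * Dz ρ p w) / (c - d)) := by
      intro p
      simp only [nu, ← hd, ← hc, sub_mul, Finset.sum_mul]
      rw [sub_sub, ← Finset.sum_add_distrib]
      congr 1
      · ring
      · refine Finset.sum_congr rfl fun q _ => ?_; ring
    rw [Finset.sum_congr rfl fun p _ => expand p]
    rw [Finset.sum_sub_distrib, Finset.sum_sub_distrib, ← Finset.sum_div, ← Finset.mul_sum, hS]
    have e1 : ∑ p, ∑ q, Dtzbar ρ j q w * (fibHessInv ρ w q p * Dz ρ p w)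
        = ∑ q, Dtzbar ρ j q w * rup ρ q w := by
      rw [Finset.sum_comm]
      refine Finset.sum_congr rfl fun q _ => ?_
      rw [← Finset.mul_sum]
      rfl
    have e2 : ∑ p, ∑ q, Dtzbar ρ j q w * rup ρ q w
          * ((starRingEnd ℂ) (rup ρ p w) * Dz ρ p w) / (c - d)
        = (∑ q, Dtzbar ρ j q w * rup ρ q w) * d / (c - d) := by
      rw [← hS]
      simp only [← Finset.sum_div]
      congr 1
      rw [Finset.sum_comm, Finset.sum_mul]
      refine Finset.sum_congr rfl fun q _ => ?_
      rw [← Finset.mul_sum]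
    rw [e1, e2]
  have main : ∀ j : Fin n, Dt ρ j w + ∑ p, nu ρ j p w * Dz ρ p w
      = c * (Dt ρ j w - ∑ q, Dtzbar ρ j q w * rup ρ q w) / (c - d) := by
    intro j
    rw [key j]
    field_simp
    ring
  refine ⟨main, fun h0 j => ?_⟩
  rw [main j, hc, h0]
  simp

end
end

section
/- Let ρ be a real-valued C² function on an open subset of ℂⁿ × ℂᵐ and let w be a point where ρ(w) = 0, the fiberwise complex Hessian (ρ_{p q̄}(w)) is positive definite, and the fiber gradient (ρ_p(w))_{1≤p≤m} is nonzero (so that |∂ρ|²(w) > 0). Then for all 1 ≤ j,k ≤ n, evaluating everything at w: ρ_{j k̄} + Σ_p ν_j^p \overline{ρ_{k p̄}} + Σ_q \overline{ν_k^q} ρ_{j q̄} + Σ_{p,q} ν_j^p \overline{ν_k^q} ρ_{p q̄} = ( ρ_{j k̄} − Σ_{p,s} ρ_{j s̄}ρ^{s p̄}\overline{ρ_{k p̄}} ) + ( ρ_j − Σ_s ρ_{j s̄}ρ^s )( ρ_{k̄} − Σ_p \overline{ρ_{k p̄}}ρ^{p̄} )/|∂ρ|². -/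
open MeasureTheory Complex
open scoped ComplexOrder

noncomputable section

local notation "conj'" => starRingEnd ℂ

lemma wdzbar_eq_conj_wdz {E : Type*} [NormedAddCommGroup E] [NormedSpace ℂ E]
    (ρ : E → ℝ) (x : E) (hρ : DifferentiableAt ℝ ρ x) (v : E) :
    wdzbar (rc ρ) x v = (starRingEnd ℂ) (wdz (rc ρ) x v) := by
  have h : fderiv ℝ (rc ρ) x = Complex.ofRealCLM.comp (fderiv ℝ ρ x) :=
    (Complex.ofRealCLM.hasFDerivAt.comp x hρ.hasFDerivAt).fderiv
  simp only [wdz, wdzbar, h, ContinuousLinearMap.coe_comp', Function.comp_apply,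
    Complex.ofRealCLM_apply, map_mul, map_sub, map_add, map_div₀, map_one, map_ofNat,
    Complex.conj_ofReal, Complex.conj_I]
  ring

lemma key_alg {m : ℕ} (H G : Matrix (Fin m) (Fin m) ℂ)
    (hHG : H * G = 1) (hGH : G * H = 1)
    (hGerm : ∀ p q, conj' (G p q) = G q p)
    (z r a b : Fin m → ℂ) (hr : ∀ p, r p = ∑ q, G p q * z q)
    (d : ℂ) (hd : d = ∑ p, conj' (z p) * r p) (hd0 : d ≠ 0)
    (Tj Tk Dtt : ℂ) (νj νk : Fin m → ℂ)
    (hνj : ∀ p, νj p = Tj * conj' (r p) / (0 - d)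
      - ∑ q, (a q * G q p + a q * r q * conj' (r p) / (0 - d)))
    (hνk : ∀ p, νk p = Tk * conj' (r p) / (0 - d)
      - ∑ q, (b q * G q p + b q * r q * conj' (r p) / (0 - d))) :
    Dtt + (∑ p, νj p * conj' (b p)) + (∑ q, conj' (νk q) * a q)
      + (∑ p, ∑ q, νj p * conj' (νk q) * H p q)
    = (Dtt - ∑ p, ∑ t, a t * G t p * conj' (b p))
      + (Tj - ∑ t, a t * r t) * (conj' Tk - ∑ p, conj' (b p) * conj' (r p)) / d := by
  -- abbreviations (as plain expressions)
  have hpull : ∀ (f : Fin m → ℂ) (cst : ℂ), (∑ p, -(cst * f p) / d) = -(cst * ∑ p, f p) / d := by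
    intro f cst
    rw [← Finset.sum_div, Finset.sum_neg_distrib, ← Finset.mul_sum]
  -- basic matrix identities
  have hHr : ∀ p, ∑ q, H p q * r q = z p := by
    intro p
    calc ∑ q, H p q * r q = ∑ q, ∑ s, H p q * (G q s * z s) := by
          refine Finset.sum_congr rfl fun q _ => ?_
          rw [hr q, Finset.mul_sum]
      _ = ∑ s, (∑ q, H p q * G q s) * z s := by
          rw [Finset.sum_comm]
          refine Finset.sum_congr rfl fun s _ => ?_
          rw [Finset.sum_mul]
          exact Finset.sum_congr rfl fun q _ => by ring
      _ = z p := by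
          have h1 : ∀ s, (∑ q, H p q * G q s) = (1 : Matrix (Fin m) (Fin m) ℂ) p s := by
            intro s; rw [← hHG, Matrix.mul_apply]
          simp [h1, Matrix.one_apply]
  have hrc : ∀ p, conj' (r p) = ∑ s, G s p * conj' (z s) := by
    intro p
    rw [hr p, map_sum]
    exact Finset.sum_congr rfl fun s _ => by rw [map_mul, hGerm]
  have hrH : ∀ q, ∑ p, conj' (r p) * H p q = conj' (z q) := by
    intro q
    calc ∑ p, conj' (r p) * H p q = ∑ p, ∑ s, G s p * conj' (z s) * H p q := by
          refine Finset.sum_congr rfl fun p _ => ?_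
          rw [hrc p, Finset.sum_mul]
      _ = ∑ s, conj' (z s) * ∑ p, G s p * H p q := by
          rw [Finset.sum_comm]
          refine Finset.sum_congr rfl fun s _ => ?_
          rw [Finset.mul_sum]
          exact Finset.sum_congr rfl fun p _ => by ring
      _ = conj' (z q) := by
          have h1 : ∀ s, (∑ p, G s p * H p q) = (1 : Matrix (Fin m) (Fin m) ℂ) s q := by
            intro s; rw [← hGH, Matrix.mul_apply]
          simp [h1, Matrix.one_apply]
  have hdz : ∑ p, conj' (r p) * z p = d := by
    calc ∑ p, conj' (r p) * z p = ∑ p, ∑ s, G s p * conj' (z s) * z p := by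
          refine Finset.sum_congr rfl fun p _ => ?_
          rw [hrc p, Finset.sum_mul]
      _ = ∑ s, conj' (z s) * ∑ p, G s p * z p := by
          rw [Finset.sum_comm]
          refine Finset.sum_congr rfl fun s _ => ?_
          rw [Finset.mul_sum]
          exact Finset.sum_congr rfl fun p _ => by ring
      _ = d := by
          rw [hd]
          exact Finset.sum_congr rfl fun s _ => by rw [← hr]
  have hdc : conj' d = d := by
    have h1 : conj' d = ∑ p, conj' (r p) * z p := by
      rw [hd, map_sum]
      refine Finset.sum_congr rfl fun p _ => ?_
      rw [map_mul, Complex.conj_conj]; ring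
    rw [h1, hdz]
  -- normal forms for ν
  have hsplit : ∀ (u : Fin m → ℂ) (p : Fin m),
      (∑ q, (u q * G q p + u q * r q * conj' (r p) / (0 - d)))
        = (∑ q, u q * G q p) + (∑ t, u t * r t) * conj' (r p) / (0 - d) := by
    intro u p
    rw [Finset.sum_add_distrib, ← Finset.sum_div, ← Finset.sum_mul]
  have hνj' : ∀ p, νj p = -((Tj - ∑ t, a t * r t) * conj' (r p)) / d - ∑ q, a q * G q p := by
    intro p
    rw [hνj p, hsplit a p]
    simp only [zero_sub, div_neg]
    ring
  have hνk' : ∀ p, νk p = -((Tk - ∑ t, b t * r t) * conj' (r p)) / d - ∑ q, b q * G q p := by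
    intro p
    rw [hνk p, hsplit b p]
    simp only [zero_sub, div_neg]
    ring
  have hνkc : ∀ q, conj' (νk q)
      = -((conj' Tk - ∑ t, conj' (b t) * conj' (r t)) * r q) / d - ∑ s, conj' (b s) * G q s := by
    intro q
    rw [hνk' q]
    simp only [map_sub, map_neg, map_div₀, map_mul, map_sum, Complex.conj_conj, hdc, hGerm]
  -- the three sums
  have hS1 : (∑ p, νj p * conj' (b p))
      = -((Tj - ∑ t, a t * r t) * ∑ p, conj' (b p) * conj' (r p)) / d
        - ∑ p, ∑ t, a t * G t p * conj' (b p) := by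
    calc ∑ p, νj p * conj' (b p)
        = ∑ p, (-((Tj - ∑ t, a t * r t) * (conj' (b p) * conj' (r p))) / d
            - ∑ t, a t * G t p * conj' (b p)) := by
          refine Finset.sum_congr rfl fun p _ => ?_
          rw [hνj' p, sub_mul, Finset.sum_mul]
          ring
      _ = (∑ p, -((Tj - ∑ t, a t * r t) * (conj' (b p) * conj' (r p))) / d)
            - ∑ p, ∑ t, a t * G t p * conj' (b p) := Finset.sum_sub_distrib _ _
      _ = _ := by rw [hpull]
  have hS2 : (∑ q, conj' (νk q) * a q)
      = -((conj' Tk - ∑ t, conj' (b t) * conj' (r t)) * ∑ t, a t * r t) / d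
        - ∑ p, ∑ t, a t * G t p * conj' (b p) := by
    calc ∑ q, conj' (νk q) * a q
        = ∑ q, (-((conj' Tk - ∑ t, conj' (b t) * conj' (r t)) * (a q * r q)) / d
            - ∑ s, a q * G q s * conj' (b s)) := by
          refine Finset.sum_congr rfl fun q _ => ?_
          have h2 : ∑ s, conj' (b s) * G q s * a q = ∑ s, a q * G q s * conj' (b s) :=
            Finset.sum_congr rfl fun s _ => by ring
          rw [hνkc q, sub_mul, Finset.sum_mul, h2]
          ring
      _ = (∑ q, -((conj' Tk - ∑ t, conj' (b t) * conj' (r t)) * (a q * r q)) / d)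
            - ∑ q, ∑ s, a q * G q s * conj' (b s) := Finset.sum_sub_distrib _ _
      _ = _ := by
          rw [hpull, Finset.sum_comm]
  -- inner sum for S3
  have e1 : ∀ p, ∑ q, (∑ s, conj' (b s) * G q s) * H p q = conj' (b p) := by
    intro p
    calc ∑ q, (∑ s, conj' (b s) * G q s) * H p q
        = ∑ q, ∑ s, conj' (b s) * (H p q * G q s) := by
          refine Finset.sum_congr rfl fun q _ => ?_
          rw [Finset.sum_mul]
          exact Finset.sum_congr rfl fun s _ => by ring
      _ = ∑ s, conj' (b s) * ∑ q, H p q * G q s := by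
          rw [Finset.sum_comm]
          refine Finset.sum_congr rfl fun s _ => ?_
          rw [Finset.mul_sum]
      _ = conj' (b p) := by
          have h1 : ∀ s, (∑ q, H p q * G q s) = (1 : Matrix (Fin m) (Fin m) ℂ) p s := by
            intro s; rw [← hHG, Matrix.mul_apply]
          simp [h1, Matrix.one_apply]
  have hinner : ∀ p, ∑ q, conj' (νk q) * H p q
      = -((conj' Tk - ∑ t, conj' (b t) * conj' (r t)) * z p) / d - conj' (b p) := by
    intro p
    calc ∑ q, conj' (νk q) * H p q
        = ∑ q, (-((conj' Tk - ∑ t, conj' (b t) * conj' (r t)) * (H p q * r q)) / d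
            - (∑ s, conj' (b s) * G q s) * H p q) := by
          refine Finset.sum_congr rfl fun q _ => ?_
          rw [hνkc q, sub_mul]
          ring
      _ = (∑ q, -((conj' Tk - ∑ t, conj' (b t) * conj' (r t)) * (H p q * r q)) / d)
            - ∑ q, (∑ s, conj' (b s) * G q s) * H p q := Finset.sum_sub_distrib _ _
      _ = _ := by rw [hpull, hHr p, e1 p]
  have e3 : ∑ p, (∑ t, a t * G t p) * z p = ∑ t, a t * r t := by
    calc ∑ p, (∑ t, a t * G t p) * z p = ∑ p, ∑ t, a t * (G t p * z p) := by
          refine Finset.sum_congr rfl fun p _ => ?_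
          rw [Finset.sum_mul]
          exact Finset.sum_congr rfl fun t _ => by ring
      _ = ∑ t, a t * ∑ p, G t p * z p := by
          rw [Finset.sum_comm]
          refine Finset.sum_congr rfl fun t _ => ?_
          rw [Finset.mul_sum]
      _ = ∑ t, a t * r t := Finset.sum_congr rfl fun t _ => by rw [← hr]
  have hS3 : (∑ p, ∑ q, νj p * conj' (νk q) * H p q)
      = (Tj - ∑ t, a t * r t) * ((conj' Tk - ∑ t, conj' (b t) * conj' (r t))) / d
        + (Tj - ∑ t, a t * r t) * (∑ p, conj' (b p) * conj' (r p)) / d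
        + (conj' Tk - ∑ t, conj' (b t) * conj' (r t)) * (∑ t, a t * r t) / d
        + ∑ p, ∑ t, a t * G t p * conj' (b p) := by
    have step1 : (∑ p, ∑ q, νj p * conj' (νk q) * H p q)
        = ∑ p, νj p * (∑ q, conj' (νk q) * H p q) := by
      refine Finset.sum_congr rfl fun p _ => ?_
      rw [Finset.mul_sum]
      exact Finset.sum_congr rfl fun q _ => by ring
    rw [step1]
    have step2 : ∀ p, νj p * (∑ q, conj' (νk q) * H p q)
        = (Tj - ∑ t, a t * r t) * (conj' Tk - ∑ t, conj' (b t) * conj' (r t))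
            * (conj' (r p) * z p) / (d * d)
          + (Tj - ∑ t, a t * r t) * (conj' (b p) * conj' (r p)) / d
          + (conj' Tk - ∑ t, conj' (b t) * conj' (r t)) * ((∑ t, a t * G t p) * z p) / d
          + (∑ t, a t * G t p) * conj' (b p) := by
      intro p
      rw [hνj' p, hinner p]
      field_simp
      ring
    rw [Finset.sum_congr rfl fun p _ => step2 p]
    rw [Finset.sum_add_distrib, Finset.sum_add_distrib, Finset.sum_add_distrib]
    have hT1 : ∑ p, (Tj - ∑ t, a t * r t) * (conj' Tk - ∑ t, conj' (b t) * conj' (r t))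
        * (conj' (r p) * z p) / (d * d)
        = (Tj - ∑ t, a t * r t) * ((conj' Tk - ∑ t, conj' (b t) * conj' (r t))) / d := by
      simp only [mul_assoc]
      rw [← Finset.sum_div, ← Finset.mul_sum, ← Finset.mul_sum, hdz]
      field_simp
    have hT2 : ∑ p, (Tj - ∑ t, a t * r t) * (conj' (b p) * conj' (r p)) / d
        = (Tj - ∑ t, a t * r t) * (∑ p, conj' (b p) * conj' (r p)) / d := by
      rw [← Finset.sum_div, ← Finset.mul_sum]
    have hT3 : ∑ p, (conj' Tk - ∑ t, conj' (b t) * conj' (r t)) * ((∑ t, a t * G t p) * z p) / d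
        = (conj' Tk - ∑ t, conj' (b t) * conj' (r t)) * (∑ t, a t * r t) / d := by
      rw [← Finset.sum_div, ← Finset.mul_sum, e3]
    have hT4 : ∑ p, (∑ t, a t * G t p) * conj' (b p) = ∑ p, ∑ t, a t * G t p * conj' (b p) :=
      Finset.sum_congr rfl fun p _ => by rw [Finset.sum_mul]
    rw [hT1, hT2, hT3, hT4]
  -- final combination
  rw [hS1, hS2, hS3]
  field_simp
  ring

/-- Let `ρ` be a real-valued `C²` function on an open subset of `ℂⁿ × ℂᵐ`
and `w` a point with `ρ(w) = 0`, positive definite fiberwise complex Hessian and nonzero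
fiber gradient.  Then for all `j, k`:
`ρ_{j k̄} + Σ_p ν_j^p \overline{ρ_{k p̄}} + Σ_q \overline{ν_k^q} ρ_{j q̄}
   + Σ_{p,q} ν_j^p \overline{ν_k^q} ρ_{p q̄}
 = (ρ_{j k̄} − Σ_{p,s} ρ_{j s̄} ρ^{s p̄} \overline{ρ_{k p̄}})
   + (ρ_j − Σ_s ρ_{j s̄} ρ^s)(ρ_{k̄} − Σ_p \overline{ρ_{k p̄}} ρ^{p̄})/|∂ρ|²` at `w`. -/
theorem boundary_Hessian_identity {n m : ℕ} (s : Set (Pt n m)) (hs : IsOpen s)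
    (ρ : Pt n m → ℝ) (hρ : ContDiffOn ℝ 2 ρ s) (w : Pt n m) (hw : w ∈ s)
    (hzero : ρ w = 0) (hpos : (fibHess ρ w).PosDef)
    (hgrad : (fun p => Dz ρ p w) ≠ 0) :
    ∀ j k : Fin n,
      Dttbar ρ j k w + (∑ p, nu ρ j p w * (starRingEnd ℂ) (Dtzbar ρ k p w))
        + (∑ q, (starRingEnd ℂ) (nu ρ k q w) * Dtzbar ρ j q w)
        + (∑ p, ∑ q, nu ρ j p w * (starRingEnd ℂ) (nu ρ k q w) * Dzzbar ρ p q w)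
      = (Dttbar ρ j k w
          - ∑ p, ∑ t, Dtzbar ρ j t w * fibHessInv ρ w t p * (starRingEnd ℂ) (Dtzbar ρ k p w))
        + (Dt ρ j w - ∑ t, Dtzbar ρ j t w * rup ρ t w)
          * (Dtbar ρ k w - ∑ p, (starRingEnd ℂ) (Dtzbar ρ k p w) * (starRingEnd ℂ) (rup ρ p w))
          / dnorm2 ρ w := by
  intro j k
  have hdiffw : DifferentiableAt ℝ ρ w :=
    (hρ.differentiableOn (by norm_num)).differentiableAt (hs.mem_nhds hw)
  have hzc : ∀ p, Dzbar ρ p w = conj' (Dz ρ p w) := fun p =>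
    wdzbar_eq_conj_wdz ρ w hdiffw _
  have htc : Dtbar ρ k w = conj' (Dt ρ k w) := wdzbar_eq_conj_wdz ρ w hdiffw _
  have hdet : IsUnit (fibHess ρ w).det := (Matrix.isUnit_iff_isUnit_det _).mp hpos.isUnit
  have hHG : fibHess ρ w * fibHessInv ρ w = 1 := Matrix.mul_nonsing_inv _ hdet
  have hGH : fibHessInv ρ w * fibHess ρ w = 1 := Matrix.nonsing_inv_mul _ hdet
  have hGherm : (fibHessInv ρ w).IsHermitian := hpos.isHermitian.inv
  have hGerm : ∀ p q, conj' (fibHessInv ρ w p q) = fibHessInv ρ w q p := by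
    intro p q
    conv_rhs => rw [← hGherm]
    rw [Matrix.conjTranspose_apply, starRingEnd_apply]
  have hr : ∀ p, rup ρ p w = ∑ q, fibHessInv ρ w p q * Dz ρ q w := fun p => rfl
  have hd : dnorm2 ρ w = ∑ p, conj' (Dz ρ p w) * rup ρ p w := by
    unfold dnorm2
    exact Finset.sum_congr rfl fun p _ => by rw [hzc p]
  have hd0 : dnorm2 ρ w ≠ 0 := by
    have hGpos : (fibHessInv ρ w).PosDef := hpos.inv
    have hlt := hGpos.dotProduct_mulVec_pos hgrad
    have heq : dotProduct (star (fun p => Dz ρ p w))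
        (Matrix.mulVec (fibHessInv ρ w) (fun p => Dz ρ p w))
        = ∑ p, conj' (Dz ρ p w) * rup ρ p w := by
      rfl
    rw [hd, ← heq]
    exact hlt.ne'
  have hnuj : ∀ p, nu ρ j p w = Dt ρ j w * conj' (rup ρ p w) / (0 - dnorm2 ρ w)
      - ∑ q, (Dtzbar ρ j q w * fibHessInv ρ w q p
          + Dtzbar ρ j q w * rup ρ q w * conj' (rup ρ p w) / (0 - dnorm2 ρ w)) := by
    intro p
    simp only [nu, hzero, Complex.ofReal_zero]
  have hnuk : ∀ p, nu ρ k p w = Dt ρ k w * conj' (rup ρ p w) / (0 - dnorm2 ρ w)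
      - ∑ q, (Dtzbar ρ k q w * fibHessInv ρ w q p
          + Dtzbar ρ k q w * rup ρ q w * conj' (rup ρ p w) / (0 - dnorm2 ρ w)) := by
    intro p
    simp only [nu, hzero, Complex.ofReal_zero]
  rw [htc]
  exact key_alg (fibHess ρ w) (fibHessInv ρ w) hHG hGH hGerm
    (fun p => Dz ρ p w) (fun p => rup ρ p w)
    (fun p => Dtzbar ρ j p w) (fun p => Dtzbar ρ k p w) hr
    (dnorm2 ρ w) hd hd0 (Dt ρ j w) (Dt ρ k w) (Dttbar ρ j k w)
    (fun p => nu ρ j p w) (fun p => nu ρ k p w) hnuj hnuk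

end
end
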